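/- Under the hypotheses of the error-dynamics lemma (T∘A − L∘T = H∘C, G = T∘B), if additionally the semigroup generated by L is exponentially stable, i.e. every solution of e' = L e satisfies ‖e(t)‖ ≤ F e^{-σ t}‖e(0)‖ with F, σ > 0, then the observer w converges regionally: ‖T z(t) − w(t)‖ → 0 as t → ∞. -/

import Mathlib

open Filter Real

theorem stmt_4 {Z U W : Type*} [NormedAddCommGroup Z] [NormedSpace ℝ Z]
    [NormedAddCommGroup U] [NormedSpace ℝ U]
    [NormedAddCommGroup W] [NormedSpace ℝ W] (q : ℕ)
    (A : Z →L[ℝ] Z) (B : U →L[ℝ] Z) (T : Z →L[ℝ] W) (L : W →L[ℝ] W)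
    (C : Z →L[ℝ] (Fin q → ℝ)) (H : (Fin q → ℝ) →L[ℝ] W) (G : U →L[ℝ] W)
    (hinter : ∀ v : Z, T (A v) - L (T v) = H (C v))
    (hG : ∀ v : U, G v = T (B v))
    (F σ : ℝ) (hF : 0 < F) (hσ : 0 < σ)
    (hstab : ∀ e : ℝ → W, (∀ t : ℝ, HasDerivAt e (L (e t)) t) →
      ∀ t : ℝ, 0 ≤ t → ‖e t‖ ≤ F * Real.exp (-σ * t) * ‖e 0‖)
    (u : ℝ → U) (z : ℝ → Z) (w : ℝ → W)
    (hz : ∀ t : ℝ, HasDerivAt z (A (z t) + B (u t)) t)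
    (hw : ∀ t : ℝ, HasDerivAt w (L (w t) + G (u t) + H (C (z t))) t) :
    Tendsto (fun t => ‖T (z t) - w t‖) atTop (nhds 0) := by
  set e : ℝ → W := fun t => T (z t) - w t with he
  have hde : ∀ t : ℝ, HasDerivAt e (L (e t)) t := by
    intro t
    have h1 := (T.hasFDerivAt.comp_hasDerivAt t (hz t)).sub (hw t)
    convert h1 using 1
    · rfl
    have h2 := hinter (z t)
    have h3 := hG (u t)
    simp only [he, map_add, map_sub]
    rw [h3]
    have : T (A (z t)) = L (T (z t)) + H (C (z t)) := by
      rw [← h2]; abel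
    rw [this]; abel
  have hb := hstab e hde
  have h0 : Tendsto (fun t : ℝ => F * Real.exp (-σ * t) * ‖e 0‖) atTop (nhds 0) := by
    have hlin : Tendsto (fun t : ℝ => -σ * t) atTop atBot := by
      have h := tendsto_neg_atTop_atBot.comp (tendsto_id.const_mul_atTop hσ)
      exact h.congr (fun t => by simp [neg_mul])
    have hexp : Tendsto (fun t : ℝ => Real.exp (-σ * t)) atTop (nhds 0) :=
      Real.tendsto_exp_atBot.comp hlin
    have h2 := (hexp.const_mul F).mul_const ‖e 0‖
    rw [show F * 0 * ‖e 0‖ = 0 from by ring] at h2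
    exact h2
  apply squeeze_zero' (Filter.Eventually.of_forall fun t => norm_nonneg _) _ h0
  filter_upwards [eventually_ge_atTop (0:ℝ)] with t ht
  exact hb t ht
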